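/- Let Σ be a finite alphabet with |Σ| ≥ 2. Then: (1) 𝓛_{Σ,r} is not closed under column concatenation ⦶; (2) 𝓛_{Σ,c} is not closed under row concatenation ⊖; (3) 𝓛_{Σ,rc} is closed neither under row nor under column concatenation. In particular, for the array pattern α = [x₁ x₂; x₂ x₃], the language L_{Σ,r}(α) ⦶ L_{Σ,r}(α) is not equal to L_{Σ,r}(γ) for any array pattern γ. -/

import Mathlib

/-- A nonempty rectangular two-dimensional word (array) over `σ`. -/
structure Arr (σ : Type) : Type where
  rows : ℕ
  cols : ℕ
  rows_pos : 0 < rows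
  cols_pos : 0 < cols
  entry : Fin rows → Fin cols → σ

namespace Arr

variable {σ γ : Type}

/-- Column concatenation: place `V` to the right of `U`; `none` if heights differ. -/
def colCat (U V : Arr σ) : Option (Arr σ) :=
  if h : U.rows = V.rows then
    some { rows := U.rows
           cols := U.cols + V.cols
           rows_pos := U.rows_pos
           cols_pos := by have := U.cols_pos; omega
           entry := fun i j =>
             if hj : (j : ℕ) < U.cols then U.entry i ⟨j, hj⟩
             else V.entry (Fin.cast h i) ⟨(j : ℕ) - U.cols, by have := j.isLt; omega⟩ }
  else none

/-- Row concatenation: place `V` below `U`; `none` if widths differ. -/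
def rowCat (U V : Arr σ) : Option (Arr σ) :=
  if h : U.cols = V.cols then
    some { rows := U.rows + V.rows
           cols := U.cols
           rows_pos := by have := U.rows_pos; omega
           cols_pos := U.cols_pos
           entry := fun i j =>
             if hi : (i : ℕ) < U.rows then U.entry ⟨i, hi⟩ j
             else V.entry ⟨(i : ℕ) - U.rows, by have := i.isLt; omega⟩ (Fin.cast h j) }
  else none

/-- A two-dimensional morphism: compatible with both concatenations,
with "both sides undefined" counting as equal. -/
def IsMorphism (h : Arr σ → Arr γ) : Prop :=
  (∀ V W : Arr σ, Option.map h (colCat V W) = colCat (h V) (h W)) ∧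
  (∀ V W : Arr σ, Option.map h (rowCat V W) = rowCat (h V) (h W))

/-- Concatenate a nonempty list of (possibly undefined) arrays with the
given partial concatenation operation; `none` on the empty list. -/
def catListO (op : Arr σ → Arr σ → Option (Arr σ)) : List (Option (Arr σ)) → Option (Arr σ)
  | [] => none
  | [a] => a
  | a :: b :: rest => a.bind fun x => (catListO op (b :: rest)).bind fun y => op x y

/-- `g_{⦶,⊖}`: substitute and assemble, first column-concatenating each row,
then row-concatenating the rows. -/
def subCR {X : Type} (g : X → Arr σ) (α : Arr X) : Option (Arr σ) :=
  catListO rowCat (List.ofFn fun i : Fin α.rows =>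
    catListO colCat (List.ofFn fun j : Fin α.cols => some (g (α.entry i j))))

/-- `g_{⊖,⦶}`: substitute and assemble, first row-concatenating each column,
then column-concatenating the columns. -/
def subRC {X : Type} (g : X → Arr σ) (α : Arr X) : Option (Arr σ) :=
  catListO colCat (List.ofFn fun j : Fin α.cols =>
    catListO rowCat (List.ofFn fun i : Fin α.rows => some (g (α.entry i j))))

/-- A substitution is uniform if all images have the same dimensions. -/
def Uniform {X : Type} (g : X → Arr σ) : Prop :=
  ∃ m n : ℕ, ∀ x : X, (g x).rows = m ∧ (g x).cols = n

end Arr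

open Arr

/-- The five modes of array pattern languages. -/
inductive Mode | h | p | r | c | rc
deriving DecidableEq

/-- The array pattern language of an array pattern (an array over the
variables `ℕ`) in each mode. -/
def langOf (σ : Type) : Mode → Arr ℕ → Set (Arr σ)
  | Mode.h, α => {W | ∃ g : Arr ℕ → Arr σ, IsMorphism g ∧ g α = W}
  | Mode.p, α => {W | ∃ s : ℕ → Arr σ, subCR s α = some W ∧ subRC s α = some W}
  | Mode.r, α => {W | ∃ s : ℕ → Arr σ, subCR s α = some W}
  | Mode.c, α => {W | ∃ s : ℕ → Arr σ, subRC s α = some W}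
  | Mode.rc, α =>
      {W | ∃ s : ℕ → Arr σ, subCR s α = some W} ∪ {W | ∃ s : ℕ → Arr σ, subRC s α = some W}

/-- Row concatenation of array languages. -/
def rowCatLang {σ : Type} (L₁ L₂ : Set (Arr σ)) : Set (Arr σ) :=
  {W | ∃ U ∈ L₁, ∃ V ∈ L₂, rowCat U V = some W}

/-- Column concatenation of array languages. -/
def colCatLang {σ : Type} (L₁ L₂ : Set (Arr σ)) : Set (Arr σ) :=
  {W | ∃ U ∈ L₁, ∃ V ∈ L₂, colCat U V = some W}

/-- The 2×2 array pattern `[x₁ x₂; x₂ x₃]`. -/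
def alpha16 : Arr ℕ :=
  ⟨2, 2, by norm_num, by norm_num, fun i j => (i : ℕ) + (j : ℕ)⟩

namespace StmtAux

open Arr

variable {σ τ : Type}

/-- entry with ℕ indices and explicit proofs -/
def Arr.get (A : Arr σ) (i j : ℕ) (hi : i < A.rows) (hj : j < A.cols) : σ :=
  A.entry ⟨i, hi⟩ ⟨j, hj⟩

theorem get_congr (A : Arr σ) {i j i' j' : ℕ} (e1 : i = i') (e2 : j = j')
    (hi : i < A.rows) (hj : j < A.cols) (hi' : i' < A.rows) (hj' : j' < A.cols) :
    Arr.get A i j hi hj = Arr.get A i' j' hi' hj' := by subst e1; subst e2; rfl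

theorem arr_eq (A B : Arr σ) (hr : A.rows = B.rows) (hc : A.cols = B.cols)
    (he : ∀ i j (hi : i < A.rows) (hj : j < A.cols) (hi' : i < B.rows) (hj' : j < B.cols),
      Arr.get A i j hi hj = Arr.get B i j hi' hj') : A = B := by
  rcases A with ⟨r, c, pr, pc, e⟩
  rcases B with ⟨r', c', pr', pc', e'⟩
  simp only at hr hc
  subst hr; subst hc
  have : e = e' := by
    funext i j
    have := he i j i.isLt j.isLt i.isLt j.isLt
    simpa [Arr.get] using this
  subst this
  rfl

theorem get_of_eq {A B : Arr σ} (h : A = B) (i j : ℕ) (hi : i < A.rows) (hj : j < A.cols) :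
    Arr.get A i j hi hj = Arr.get B i j (h ▸ hi) (h ▸ hj) := by subst h; rfl

/-- 1×1 array -/
def one (x : σ) : Arr σ := ⟨1, 1, one_pos, one_pos, fun _ _ => x⟩

/-- 1×2 array -/
def two (x y : σ) : Arr σ := ⟨1, 2, one_pos, two_pos, fun _ j => if (j : ℕ) = 0 then x else y⟩

end StmtAux
namespace StmtAux
open Arr
variable {σ τ : Type}

def hcat (U V : Arr σ) (h : U.rows = V.rows) : Arr σ :=
  { rows := U.rows, cols := U.cols + V.cols,
    rows_pos := U.rows_pos, cols_pos := by have := U.cols_pos; omega,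
    entry := fun i j =>
      if hj : (j : ℕ) < U.cols then U.entry i ⟨j, hj⟩
      else V.entry (Fin.cast h i) ⟨(j : ℕ) - U.cols, by have := j.isLt; omega⟩ }

def vcat (U V : Arr σ) (h : U.cols = V.cols) : Arr σ :=
  { rows := U.rows + V.rows, cols := U.cols,
    rows_pos := by have := U.rows_pos; omega, cols_pos := U.cols_pos,
    entry := fun i j =>
      if hi : (i : ℕ) < U.rows then U.entry ⟨i, hi⟩ j
      else V.entry ⟨(i : ℕ) - U.rows, by have := i.isLt; omega⟩ (Fin.cast h j) }

theorem colCat_def (U V : Arr σ) (h : U.rows = V.rows) :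
    colCat U V = some (hcat U V h) := by
  rw [colCat, dif_pos h]; rfl

theorem rowCat_def (U V : Arr σ) (h : U.cols = V.cols) :
    rowCat U V = some (vcat U V h) := by
  rw [rowCat, dif_pos h]; rfl

theorem colCat_dest {U V W : Arr σ} (h : colCat U V = some W) :
    U.rows = V.rows ∧ W.rows = U.rows ∧ W.cols = U.cols + V.cols := by
  by_cases hr : U.rows = V.rows
  · rw [colCat_def U V hr] at h
    cases Option.some_inj.mp h
    exact ⟨hr, rfl, rfl⟩
  · rw [colCat, dif_neg hr] at h; cases h

theorem rowCat_dest {U V W : Arr σ} (h : rowCat U V = some W) :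
    U.cols = V.cols ∧ W.cols = U.cols ∧ W.rows = U.rows + V.rows := by
  by_cases hc : U.cols = V.cols
  · rw [rowCat_def U V hc] at h
    cases Option.some_inj.mp h
    exact ⟨hc, rfl, rfl⟩
  · rw [rowCat, dif_neg hc] at h; cases h

theorem colCat_get_left {U V W : Arr σ} (h : colCat U V = some W)
    (i j : ℕ) (hi : i < W.rows) (hj : j < W.cols) (hi' : i < U.rows) (hj' : j < U.cols) :
    Arr.get W i j hi hj = Arr.get U i j hi' hj' := by
  obtain ⟨hr, _, _⟩ := colCat_dest h
  rw [colCat_def U V hr] at h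
  cases Option.some_inj.mp h
  simp [Arr.get, hcat, hj']

theorem colCat_get_right {U V W : Arr σ} (h : colCat U V = some W)
    (i c : ℕ) (hi : i < W.rows) (hj : U.cols + c < W.cols) (hi' : i < V.rows) (hc : c < V.cols) :
    Arr.get W i (U.cols + c) hi hj = Arr.get V i c hi' hc := by
  obtain ⟨hr, _, _⟩ := colCat_dest h
  rw [colCat_def U V hr] at h
  cases Option.some_inj.mp h
  have hnot : ¬ (U.cols + c < U.cols) := by omega
  simp only [Arr.get, hcat, hnot, dif_neg, not_false_iff]
  congr 1 <;> (apply Fin.ext <;> simp [Fin.cast])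

theorem rowCat_get_top {U V W : Arr σ} (h : rowCat U V = some W)
    (i j : ℕ) (hi : i < W.rows) (hj : j < W.cols) (hi' : i < U.rows) (hj' : j < U.cols) :
    Arr.get W i j hi hj = Arr.get U i j hi' hj' := by
  obtain ⟨hc, _, _⟩ := rowCat_dest h
  rw [rowCat_def U V hc] at h
  cases Option.some_inj.mp h
  simp [Arr.get, vcat, hi']

theorem rowCat_get_bot {U V W : Arr σ} (h : rowCat U V = some W)
    (r j : ℕ) (hi : U.rows + r < W.rows) (hj : j < W.cols) (hr' : r < V.rows) (hj' : j < V.cols) :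
    Arr.get W (U.rows + r) j hi hj = Arr.get V r j hr' hj' := by
  obtain ⟨hc, _, _⟩ := rowCat_dest h
  rw [rowCat_def U V hc] at h
  cases Option.some_inj.mp h
  have hnot : ¬ (U.rows + r < U.rows) := by omega
  simp only [Arr.get, vcat, hnot, dif_neg, not_false_iff]
  congr 1 <;> (apply Fin.ext <;> simp [Fin.cast])

theorem colCat_defined (U V : Arr σ) (h : U.rows = V.rows) : ∃ W, colCat U V = some W :=
  ⟨_, colCat_def U V h⟩

theorem rowCat_defined (U V : Arr σ) (h : U.cols = V.cols) : ∃ W, rowCat U V = some W :=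
  ⟨_, rowCat_def U V h⟩

end StmtAux
namespace StmtAux
open Arr
variable {σ : Type}

theorem sum_ge_length (L : List ℕ) (h : ∀ x ∈ L, 0 < x) : L.length ≤ L.sum := by
  induction L with
  | nil => simp
  | cons a t ih =>
    simp only [List.length_cons, List.sum_cons]
    have := h a (by simp)
    have := ih (fun x hx => h x (by simp [hx]))
    omega

theorem all_one_of_sum_eq (L : List ℕ) (h : ∀ x ∈ L, 0 < x) (hs : L.sum = L.length) :
    ∀ x ∈ L, x = 1 := by
  induction L with
  | nil => simp
  | cons a t ih =>
    simp only [List.sum_cons, List.length_cons] at hs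
    have h1 := h a (by simp)
    have h2 := sum_ge_length t (fun x hx => h x (by simp [hx]))
    intro x hx
    rcases List.mem_cons.mp hx with rfl | hx
    · omega
    · exact ih (fun y hy => h y (by simp [hy])) (by omega) x hx

theorem catListO_cons_cons (op : Arr σ → Arr σ → Option (Arr σ)) (a b : Option (Arr σ))
    (t : List (Option (Arr σ))) :
    catListO op (a :: b :: t) = a.bind fun x => (catListO op (b :: t)).bind fun y => op x y := rfl

/-- destructor for column-concatenated option lists: dimensions -/
theorem catCol_dest : ∀ (lo : List (Option (Arr σ))) (W : Arr σ),
    catListO colCat lo = some W →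
    ∃ l : List (Arr σ), lo = l.map some ∧ l ≠ [] ∧ (∀ A ∈ l, A.rows = W.rows) ∧
      W.cols = (l.map Arr.cols).sum
  | [], W => by intro h; cases h
  | [a], W => by
    intro h
    refine ⟨[W], by simpa [catListO] using h, by simp, by simp, by simp⟩
  | a :: b :: t, W => by
    intro h
    rw [catListO_cons_cons] at h
    rcases Option.bind_eq_some_iff.mp h with ⟨A, ha, h2⟩
    rcases Option.bind_eq_some_iff.mp h2 with ⟨W', hW', hcat⟩
    obtain ⟨l', hmap, hne, hrows, hcols⟩ := catCol_dest (b :: t) W' hW'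
    obtain ⟨hr, hWr, hWc⟩ := colCat_dest hcat
    refine ⟨A :: l', by simp [ha, hmap], by simp, ?_, ?_⟩
    · intro B hB
      rcases List.mem_cons.mp hB with rfl | hB
      · omega
      · rw [hrows B hB]; omega
    · simp only [List.map_cons, List.sum_cons]; omega

theorem catRow_dest : ∀ (lo : List (Option (Arr σ))) (W : Arr σ),
    catListO rowCat lo = some W →
    ∃ l : List (Arr σ), lo = l.map some ∧ l ≠ [] ∧ (∀ A ∈ l, A.cols = W.cols) ∧
      W.rows = (l.map Arr.rows).sum
  | [], W => by intro h; cases h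
  | [a], W => by
    intro h
    refine ⟨[W], by simpa [catListO] using h, by simp, by simp, by simp⟩
  | a :: b :: t, W => by
    intro h
    rw [catListO_cons_cons] at h
    rcases Option.bind_eq_some_iff.mp h with ⟨A, ha, h2⟩
    rcases Option.bind_eq_some_iff.mp h2 with ⟨W', hW', hcat⟩
    obtain ⟨l', hmap, hne, hcols, hrows⟩ := catRow_dest (b :: t) W' hW'
    obtain ⟨hc, hWc, hWr⟩ := rowCat_dest hcat
    refine ⟨A :: l', by simp [ha, hmap], by simp, ?_, ?_⟩
    · intro B hB
      rcases List.mem_cons.mp hB with rfl | hB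
      · omega
      · rw [hcols B hB]; omega
    · simp only [List.map_cons, List.sum_cons]; omega

end StmtAux
namespace StmtAux
open Arr
variable {σ : Type}

/-- constructor: column-concatenation of a list of 1×1 arrays -/
theorem catCol_ones : ∀ (l : List (Arr σ)), l ≠ [] → (∀ A ∈ l, A.rows = 1 ∧ A.cols = 1) →
    ∃ W, catListO colCat (l.map some) = some W ∧ W.rows = 1 ∧ W.cols = l.length ∧
      ∀ (k : ℕ) (hk : k < l.length) (h1 : 0 < W.rows) (h2 : k < W.cols)
        (h3 : 0 < (l[k]'hk).rows) (h4 : 0 < (l[k]'hk).cols),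
        Arr.get W 0 k h1 h2 = Arr.get (l[k]'hk) 0 0 h3 h4
  | [], hne, _ => absurd rfl hne
  | [A], _, hA => by
    refine ⟨A, by simp [catListO], (hA A (by simp)).1, by simp [(hA A (by simp)).2], ?_⟩
    intro k hk h1 h2 h3 h4
    simp only [List.length_singleton] at hk
    interval_cases k
    simp only [List.getElem_singleton]
  | A :: B :: t, _, hA => by
    obtain ⟨W', hcat', hr', hc', hent'⟩ := catCol_ones (B :: t) (by simp)
      (fun X hX => hA X (by simp [hX]))
    have hAr : A.rows = 1 := (hA A (by simp)).1
    have hAc : A.cols = 1 := (hA A (by simp)).2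
    simp only [List.length_cons] at hc' ⊢
    have hrr : A.rows = W'.rows := by omega
    refine ⟨hcat A W' hrr, ?_, by simp [hcat]; omega, by simp [hcat]; omega, ?_⟩
    · simp only [List.map_cons]
      rw [catListO_cons_cons, Option.bind_some]
      rw [show catListO colCat (some B :: List.map some t) = some W' from by
        simpa only [List.map_cons] using hcat', Option.bind_some, colCat_def A W' hrr]
    · intro k hk h1 h2 h3 h4
      match k with
      | 0 =>
        simp only [Arr.get, hcat, List.getElem_cons_zero] at *
        rw [dif_pos (by omega : (0:ℕ) < A.cols)]
      | (k+1) =>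
        simp only [List.getElem_cons_succ]
        have hk' : k < (B :: t).length := by simp only [List.length_cons]; omega
        have hW2 : (hcat A W' hrr).cols = A.cols + W'.cols := rfl
        have e1 : Arr.get (hcat A W' hrr) 0 (A.cols + k) (by omega)
            (by omega) = Arr.get W' 0 k (by omega) (by omega) :=
          colCat_get_right (colCat_def A W' hrr) 0 k _ _ _ (by omega)
        rw [get_congr _ rfl (by omega : k + 1 = A.cols + k) h1 h2 (by omega) (by omega), e1]
        exact hent' k hk' _ _ _ _

/-- constructor: row-concatenation of a list of 1×n arrays -/
theorem catRow_rows : ∀ (l : List (Arr σ)) (n : ℕ), l ≠ [] →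
    (∀ A ∈ l, A.rows = 1 ∧ A.cols = n) →
    ∃ W, catListO rowCat (l.map some) = some W ∧ W.rows = l.length ∧ W.cols = n ∧
      ∀ (k j : ℕ) (hk : k < l.length) (h1 : k < W.rows) (h2 : j < W.cols)
        (h3 : 0 < (l[k]'hk).rows) (h4 : j < (l[k]'hk).cols),
        Arr.get W k j h1 h2 = Arr.get (l[k]'hk) 0 j h3 h4
  | [], n, hne, _ => absurd rfl hne
  | [A], n, _, hA => by
    refine ⟨A, by simp [catListO], by simp [(hA A (by simp)).1], (hA A (by simp)).2, ?_⟩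
    intro k j hk h1 h2 h3 h4
    simp only [List.length_singleton] at hk
    interval_cases k
    simp only [List.getElem_singleton]
  | A :: B :: t, n, _, hA => by
    obtain ⟨W', hcat', hr', hc', hent'⟩ := catRow_rows (B :: t) n (by simp)
      (fun X hX => hA X (by simp [hX]))
    have hAr : A.rows = 1 := (hA A (by simp)).1
    have hAc : A.cols = n := (hA A (by simp)).2
    simp only [List.length_cons] at hr' ⊢
    have hcc : A.cols = W'.cols := by omega
    have hW2 : (vcat A W' hcc).rows = A.rows + W'.rows := rfl
    refine ⟨vcat A W' hcc, ?_, by simp [vcat]; omega, by simp [vcat]; omega, ?_⟩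
    · simp only [List.map_cons]
      rw [catListO_cons_cons, Option.bind_some]
      rw [show catListO rowCat (some B :: List.map some t) = some W' from by
        simpa only [List.map_cons] using hcat', Option.bind_some, rowCat_def A W' hcc]
    · intro k j hk h1 h2 h3 h4
      match k with
      | 0 =>
        simp only [Arr.get, vcat, List.getElem_cons_zero] at *
        rw [dif_pos (by omega : (0:ℕ) < A.rows)]
      | (k+1) =>
        simp only [List.getElem_cons_succ]
        have hk' : k < (B :: t).length := by simp only [List.length_cons]; omega
        have hWc : (vcat A W' hcc).cols = A.cols := rfl
        have e1 : Arr.get (vcat A W' hcc) (A.rows + k) j (by omega)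
            (by omega) = Arr.get W' k j (by omega) (by omega) :=
          rowCat_get_bot (rowCat_def A W' hcc) k j _ _ (by omega) (by omega)
        rw [get_congr _ (by omega : k + 1 = A.rows + k) rfl h1 h2 (by omega) (by omega), e1]
        exact hent' k j hk' _ _ _ _

end StmtAux
namespace StmtAux
open Arr
variable {σ : Type}

/-- the letter image of a pattern -/
def mkImg (γ : Arr ℕ) (f : ℕ → σ) : Arr σ :=
  ⟨γ.rows, γ.cols, γ.rows_pos, γ.cols_pos, fun i j => f (γ.entry i j)⟩

theorem mkImg_mem (γ : Arr ℕ) (f : ℕ → σ) :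
    subCR (fun x => one (f x)) γ = some (mkImg γ f) := by
  classical
  have hrow : ∀ i : Fin γ.rows, ∃ Wi,
      catListO colCat (List.ofFn fun j : Fin γ.cols => some (one (f (γ.entry i j)))) = some Wi ∧
      Wi.rows = 1 ∧ Wi.cols = γ.cols ∧
      ∀ (j : ℕ) (hj : j < γ.cols) (h1 : 0 < Wi.rows) (h2 : j < Wi.cols),
        Arr.get Wi 0 j h1 h2 = f (γ.entry i ⟨j, hj⟩) := by
    intro i
    have hlen : (List.ofFn fun j : Fin γ.cols => one (f (γ.entry i j)) : List (Arr σ)).length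
        = γ.cols := by simp
    obtain ⟨Wi, h1, h2, h3, h4⟩ :=
      catCol_ones (List.ofFn fun j : Fin γ.cols => one (f (γ.entry i j)))
      (by simp [List.ofFn_eq_nil_iff]; exact γ.cols_pos.ne')
      (by intro A hA; rw [List.mem_ofFn] at hA; obtain ⟨j, rfl⟩ := hA; exact ⟨rfl, rfl⟩)
    refine ⟨Wi, by rw [← h1, List.map_ofFn]; rfl, h2, by omega, ?_⟩
    intro j hj hh1 hh2
    have hk : j < (List.ofFn fun j : Fin γ.cols => one (f (γ.entry i j)) : List (Arr σ)).length := by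
      omega
    have hlj : (List.ofFn fun j : Fin γ.cols => one (f (γ.entry i j)) : List (Arr σ))[j]'hk
        = one (f (γ.entry i ⟨j, hj⟩)) := by simp [List.getElem_ofFn]
    have h5 := h4 j hk hh1 hh2 (by rw [hlj]; exact one_pos) (by rw [hlj]; exact one_pos)
    rw [h5, get_of_eq hlj]
    rfl
  choose Wrow hW1 hW2 hW3 hW4 using hrow
  have houter : (List.ofFn fun i : Fin γ.rows =>
      catListO colCat (List.ofFn fun j : Fin γ.cols => some ((fun x => one (f x)) (γ.entry i j))))
      = (List.ofFn Wrow).map some := by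
    rw [List.map_ofFn]
    exact congrArg List.ofFn (funext fun i => by simpa using hW1 i)
  obtain ⟨W, hc1, hc2, hc3, hc4⟩ := catRow_rows (List.ofFn Wrow) γ.cols
    (by simp [List.ofFn_eq_nil_iff]; exact γ.rows_pos.ne')
    (by intro A hA; rw [List.mem_ofFn] at hA; obtain ⟨i, rfl⟩ := hA; exact ⟨hW2 i, hW3 i⟩)
  rw [subCR, houter, hc1]
  congr 1
  apply arr_eq
  · simp only [List.length_ofFn] at hc2; rw [hc2]; rfl
  · rw [hc3]; rfl
  · intro i j hi hj hi' hj'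
    simp only [List.length_ofFn] at hc2
    have hilt : i < (List.ofFn Wrow).length := by simp [List.length_ofFn]; omega
    have hgi : i < γ.rows := by omega
    have hgj : j < γ.cols := by omega
    have hW : ((List.ofFn Wrow)[i]'hilt) = Wrow ⟨i, hgi⟩ := by simp [List.getElem_ofFn]
    have e1 := hc4 i j hilt hi hj (by rw [hW, hW2]; omega) (by rw [hW, hW3]; omega)
    rw [e1, get_of_eq hW, hW4 ⟨i, hgi⟩ j hgj]
    simp [mkImg, Arr.get]
end StmtAux
namespace StmtAux
open Arr
variable {σ : Type}

theorem subCR_dims {s : ℕ → Arr σ} {γ : Arr ℕ} {W : Arr σ} (h : subCR s γ = some W) :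
    γ.rows ≤ W.rows ∧ γ.cols ≤ W.cols := by
  rw [subCR] at h
  obtain ⟨l, hmap, hne, hcols, hrows⟩ := catRow_dest _ _ h
  have hlen : l.length = γ.rows := by
    have := congrArg List.length hmap
    simpa using this.symm
  constructor
  · rw [hrows]
    calc γ.rows = (l.map Arr.rows).length := by simp [hlen]
    _ ≤ (l.map Arr.rows).sum := sum_ge_length _ (by
        intro x hx
        rcases List.mem_map.mp hx with ⟨A, _, rfl⟩
        exact A.rows_pos)
  · -- look at row 0
    have h0 : 0 < l.length := by rw [hlen]; exact γ.rows_pos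
    have hW0 : catListO colCat (List.ofFn fun j : Fin γ.cols =>
        some (s (γ.entry ⟨0, γ.rows_pos⟩ j))) = some (l[0]'h0) := by
      have e := List.getElem_of_eq hmap (show 0 < (List.ofFn fun i : Fin γ.rows =>
        catListO colCat (List.ofFn fun j : Fin γ.cols => some (s (γ.entry i j)))).length from by
          simp; exact γ.rows_pos)
      rw [List.getElem_ofFn] at e
      rw [e]; simp
    obtain ⟨l', hmap', hne', hrows', hcols'⟩ := catCol_dest _ _ hW0
    have hlen' : l'.length = γ.cols := by
      have := congrArg List.length hmap'
      simpa using this.symm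
    have : (l[0]'h0).cols = W.cols := hcols _ (List.getElem_mem h0)
    rw [← this, hcols']
    calc γ.cols = (l'.map Arr.cols).length := by simp [hlen']
    _ ≤ (l'.map Arr.cols).sum := sum_ge_length _ (by
        intro x hx
        rcases List.mem_map.mp hx with ⟨A, _, rfl⟩
        exact A.cols_pos)

theorem subCR_rigid {s : ℕ → Arr σ} {γ : Arr ℕ} {W : Arr σ} (h : subCR s γ = some W)
    (hr : W.rows = γ.rows) (hc : W.cols = γ.cols) : ∃ f : ℕ → σ, W = mkImg γ f := by
  classical
  refine ⟨fun x => (s x).entry ⟨0, (s x).rows_pos⟩ ⟨0, (s x).cols_pos⟩, ?_⟩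
  rw [subCR] at h
  obtain ⟨l, hmap, hne, hcols, hrows⟩ := catRow_dest _ _ h
  have hlen : l.length = γ.rows := by
    have := congrArg List.length hmap
    simpa using this.symm
  -- all rows of l have height 1
  have hone : ∀ A ∈ l, A.rows = 1 := by
    intro A hA
    have := all_one_of_sum_eq (l.map Arr.rows)
      (by intro x hx; rcases List.mem_map.mp hx with ⟨A, _, rfl⟩; exact A.rows_pos)
      (by rw [← hrows]; simp [hlen, hr])
    exact this A.rows (List.mem_map.mpr ⟨A, hA, rfl⟩)
  -- inner analysis for each row index i
  have hinner : ∀ (i : ℕ) (hi : i < γ.rows) (j : ℕ) (hj : j < γ.cols)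
      (h3 : i < l.length) (h4 : j < (l[i]'h3).cols) (h5 : 0 < (l[i]'h3).rows),
      Arr.get (l[i]'h3) 0 j h5 h4
        = (s (γ.entry ⟨i, hi⟩ ⟨j, hj⟩)).entry ⟨0, (s _).rows_pos⟩ ⟨0, (s _).cols_pos⟩ := by
    intro i hi j hj h3 h4 h5
    have hio : catListO colCat (List.ofFn fun j : Fin γ.cols =>
        some (s (γ.entry ⟨i, hi⟩ j))) = some (l[i]'h3) := by
      have e := List.getElem_of_eq hmap (show i < (List.ofFn fun i : Fin γ.rows =>
        catListO colCat (List.ofFn fun j : Fin γ.cols => some (s (γ.entry i j)))).length from by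
          simpa using hi)
      rw [List.getElem_ofFn] at e
      rw [e]; simp
    obtain ⟨l', hmap', hne', hrows', hcols'⟩ := catCol_dest _ _ hio
    have hlen' : l'.length = γ.cols := by
      have := congrArg List.length hmap'
      simpa using this.symm
    -- all cells are 1×1
    have hcell : ∀ A ∈ l', A.rows = 1 ∧ A.cols = 1 := by
      intro A hA
      have hA1 : A.rows = (l[i]'h3).rows := hrows' A hA
      have hA2 := all_one_of_sum_eq (l'.map Arr.cols)
        (by intro x hx; rcases List.mem_map.mp hx with ⟨B, _, rfl⟩; exact B.cols_pos)
        (by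
          rw [← hcols']
          have : (l[i]'h3).cols = W.cols := hcols _ (List.getElem_mem h3)
          simp [this, hlen', hc])
      exact ⟨by rw [hA1]; exact hone _ (List.getElem_mem h3),
             hA2 A.cols (List.mem_map.mpr ⟨A, hA, rfl⟩)⟩
    obtain ⟨Wi, hw1, hw2, hw3, hw4⟩ := catCol_ones l' (by
        intro hnil; rw [hnil] at hlen'; simp at hlen'; omega) hcell
    rw [← hmap'] at hw1
    have hWi : Wi = l[i]'h3 := by
      have := hw1.symm.trans hio
      exact Option.some_inj.mp this
    subst hWi
    have hjl : j < l'.length := by omega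
    have hcellj : l'[j]'hjl = s (γ.entry ⟨i, hi⟩ ⟨j, hj⟩) := by
      have e := List.getElem_of_eq hmap' (show j < (List.ofFn fun j : Fin γ.cols =>
        some (s (γ.entry ⟨i, hi⟩ j))).length from by simpa using hj)
      rw [List.getElem_ofFn] at e
      simp only [List.getElem_map] at e
      exact (Option.some_inj.mp e).symm
    have := hw4 j hjl h5 h4 (by rw [hcellj]; exact (s _).rows_pos)
      (by rw [hcellj]; exact (s _).cols_pos)
    rw [this, get_of_eq hcellj]
    rfl
  -- outer assembly
  obtain ⟨W', hv1, hv2, hv3, hv4⟩ := catRow_rows l W.cols (by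
      intro hnil; rw [hnil] at hlen; simp at hlen; have := γ.rows_pos; omega)
    (fun A hA => ⟨hone A hA, hcols A hA⟩)
  rw [← hmap] at hv1
  have hW' : W' = W := by
    have := hv1.symm.trans h
    exact Option.some_inj.mp this
  subst hW'
  apply arr_eq _ _ (by simp [mkImg, hr]) (by simp [mkImg, hc])
  intro i j hi hj hi' hj'
  have hgi : i < γ.rows := by omega
  have hgj : j < γ.cols := by omega
  have hil : i < l.length := by omega
  have := hv4 i j hil hi hj (by rw [hone _ (List.getElem_mem hil)]; omega) (by
    rw [hcols _ (List.getElem_mem hil)]; omega)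
  rw [this, hinner i hgi j hgj hil _ _]
  simp [mkImg, Arr.get]

end StmtAux
namespace StmtAux
open Arr
variable {σ τ : Type}

/-- transpose -/
def tr (A : Arr σ) : Arr σ := ⟨A.cols, A.rows, A.cols_pos, A.rows_pos, fun i j => A.entry j i⟩

@[simp] theorem tr_tr (A : Arr σ) : tr (tr A) = A := rfl

theorem tr_get (A : Arr σ) (i j : ℕ) (hi : i < A.cols) (hj : j < A.rows) :
    Arr.get (tr A) i j hi hj = Arr.get A j i hj hi := rfl

theorem tr_alpha16 : tr alpha16 = alpha16 := by
  refine arr_eq _ _ rfl rfl ?_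
  intro i j hi hj hi' hj'
  simp only [tr, alpha16, Arr.get]
  omega

theorem tr_colCat (U V : Arr σ) : rowCat (tr U) (tr V) = Option.map tr (colCat U V) := by
  by_cases h : U.rows = V.rows
  · rw [colCat_def U V h, rowCat, dif_pos (show (tr U).cols = (tr V).cols from h)]
    rfl
  · rw [colCat, dif_neg h, rowCat, dif_neg (show ¬ (tr U).cols = (tr V).cols from h)]
    rfl

theorem tr_rowCat (U V : Arr σ) : colCat (tr U) (tr V) = Option.map tr (rowCat U V) := by
  by_cases h : U.cols = V.cols
  · rw [rowCat_def U V h, colCat, dif_pos (show (tr U).rows = (tr V).rows from h)]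
    rfl
  · rw [rowCat, dif_neg h, colCat, dif_neg (show ¬ (tr U).rows = (tr V).rows from h)]
    rfl

theorem cat_tr_row : ∀ lo : List (Option (Arr σ)),
    catListO rowCat (lo.map (Option.map tr)) = Option.map tr (catListO colCat lo)
  | [] => rfl
  | [a] => by cases a <;> rfl
  | a :: b :: t => by
    simp only [List.map_cons]
    rw [catListO_cons_cons, catListO_cons_cons]
    have ih := cat_tr_row (b :: t)
    simp only [List.map_cons] at ih
    rw [ih]
    cases a with
    | none => rfl
    | some A =>
      cases hbt : catListO colCat (b :: t) with
      | none => rfl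
      | some W => simp [tr_colCat]

theorem cat_tr_col : ∀ lo : List (Option (Arr σ)),
    catListO colCat (lo.map (Option.map tr)) = Option.map tr (catListO rowCat lo)
  | [] => rfl
  | [a] => by cases a <;> rfl
  | a :: b :: t => by
    simp only [List.map_cons]
    rw [catListO_cons_cons, catListO_cons_cons]
    have ih := cat_tr_col (b :: t)
    simp only [List.map_cons] at ih
    rw [ih]
    cases a with
    | none => rfl
    | some A =>
      cases hbt : catListO rowCat (b :: t) with
      | none => rfl
      | some W => simp [tr_rowCat]

theorem subRC_tr (s : ℕ → Arr σ) (γ : Arr ℕ) :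
    subRC (fun x => tr (s x)) (tr γ) = Option.map tr (subCR s γ) := by
  rw [subRC, subCR]
  have einner : ∀ j : Fin (tr γ).cols, (List.ofFn fun i : Fin (tr γ).rows =>
      some (tr (s ((tr γ).entry i j)))) = (List.ofFn fun i : Fin γ.cols =>
      some (s (γ.entry j i))).map (Option.map tr) := by
    intro j; rw [List.map_ofFn]; rfl
  have : (List.ofFn fun j : Fin (tr γ).cols => catListO rowCat
      (List.ofFn fun i : Fin (tr γ).rows => some (tr (s ((tr γ).entry i j)))))
      = (List.ofFn fun j : Fin γ.rows => catListO colCat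
      (List.ofFn fun i : Fin γ.cols => some (s (γ.entry j i)))).map (Option.map tr) := by
    rw [List.map_ofFn]
    exact congrArg List.ofFn (funext fun j => by rw [einner j, cat_tr_row]; rfl)
  rw [this, cat_tr_col]

theorem subCR_tr (s : ℕ → Arr σ) (γ : Arr ℕ) :
    subCR (fun x => tr (s x)) (tr γ) = Option.map tr (subRC s γ) := by
  rw [subRC, subCR]
  have : (List.ofFn fun i : Fin (tr γ).rows => catListO colCat
      (List.ofFn fun j : Fin (tr γ).cols => some (tr (s ((tr γ).entry i j)))))
      = (List.ofFn fun i : Fin γ.cols => catListO rowCat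
      (List.ofFn fun j : Fin γ.rows => some (s (γ.entry j i)))).map (Option.map tr) := by
    rw [List.map_ofFn]
    refine congrArg List.ofFn (funext fun i => ?_)
    rw [show (List.ofFn fun j : Fin (tr γ).cols => some (tr (s ((tr γ).entry i j))))
      = (List.ofFn fun j : Fin γ.rows => some (s (γ.entry j i))).map (Option.map tr) from by
        rw [List.map_ofFn]; rfl, cat_tr_col]
    rfl
  rw [this, cat_tr_row]

end StmtAux
namespace StmtAux
open Arr
variable {σ : Type}

def mk2 (x y z : σ) : Arr σ :=
  ⟨2, 2, two_pos, two_pos, fun i j =>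
    if (i : ℕ) = 0 then (if (j : ℕ) = 0 then x else y) else (if (j : ℕ) = 0 then y else z)⟩

theorem subCR_alpha16 (s : ℕ → Arr σ) :
    subCR s alpha16 = (colCat (s 0) (s 1)).bind fun U1 =>
      (colCat (s 1) (s 2)).bind fun U2 => rowCat U1 U2 := by
  rw [subCR]
  have hof : ∀ (g : Fin 2 → Option (Arr σ)), List.ofFn g = [g 0, g 1] := fun g => by
    rw [List.ofFn_succ, List.ofFn_succ, List.ofFn_zero]; rfl
  show catListO rowCat (List.ofFn fun i : Fin 2 =>
      catListO colCat (List.ofFn fun j : Fin 2 => some (s (alpha16.entry i j)))) = _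
  simp only [hof]
  rw [catListO_cons_cons, catListO_cons_cons, catListO_cons_cons]
  simp only [Option.bind_some, catListO]
  rfl

theorem r16_dest {U : Arr σ} (h : U ∈ langOf σ Mode.r alpha16) :
    ∃ A B C U1 U2 : Arr σ, colCat A B = some U1 ∧ colCat B C = some U2 ∧
      rowCat U1 U2 = some U := by
  obtain ⟨s, hs⟩ := h
  rw [subCR_alpha16] at hs
  rcases Option.bind_eq_some_iff.mp hs with ⟨U1, h1, hs2⟩
  rcases Option.bind_eq_some_iff.mp hs2 with ⟨U2, h2, h3⟩
  exact ⟨s 0, s 1, s 2, U1, U2, h1, h2, h3⟩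

theorem r16_cons {A B C U1 U2 U : Arr σ} (h1 : colCat A B = some U1)
    (h2 : colCat B C = some U2) (h3 : rowCat U1 U2 = some U) :
    U ∈ langOf σ Mode.r alpha16 := by
  refine ⟨fun t => if t = 0 then A else if t = 1 then B else C, ?_⟩
  rw [subCR_alpha16]
  norm_num
  rw [h1, Option.bind_some, h2, Option.bind_some, h3]

theorem q2r {U : Arr σ} (h : U ∈ langOf σ Mode.r alpha16) : 2 ≤ U.rows ∧ 2 ≤ U.cols := by
  obtain ⟨A, B, C, U1, U2, h1, h2, h3⟩ := r16_dest h
  obtain ⟨hc12, hUc, hUr⟩ := rowCat_dest h3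
  obtain ⟨hr1, hU1r, hU1c⟩ := colCat_dest h1
  obtain ⟨hr2, hU2r, hU2c⟩ := colCat_dest h2
  have := A.rows_pos; have := B.rows_pos; have := A.cols_pos; have := B.cols_pos
  have := U2.rows_pos
  omega

theorem q3r {U : Arr σ} (h : U ∈ langOf σ Mode.r alpha16) (hr : U.rows = 2) (hc : U.cols = 2)
    (p1 : 0 < U.rows) (p2 : 1 < U.cols) (p3 : 1 < U.rows) (p4 : 0 < U.cols) :
    Arr.get U 0 1 p1 p2 = Arr.get U 1 0 p3 p4 := by
  obtain ⟨A, B, C, U1, U2, h1, h2, h3⟩ := r16_dest h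
  obtain ⟨hc12, hUc, hUr⟩ := rowCat_dest h3
  obtain ⟨hr1, hU1r, hU1c⟩ := colCat_dest h1
  obtain ⟨hr2, hU2r, hU2c⟩ := colCat_dest h2
  have hA := A.rows_pos; have hB := B.rows_pos; have hAc := A.cols_pos
  have hBc := B.cols_pos; have hCc := C.cols_pos
  have hU1 : U1.rows = 1 := by omega
  have hU2 : U2.rows = 1 := by omega
  have hAc1 : A.cols = 1 := by omega
  have hBc1 : B.cols = 1 := by omega
  have e1 : Arr.get U 0 1 p1 p2 = Arr.get U1 0 1 (by omega) (by omega) :=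
    rowCat_get_top h3 0 1 p1 p2 (by omega) (by omega)
  have e2 : Arr.get U1 0 1 (by omega) (by omega)
      = Arr.get U1 0 (A.cols + 0) (by omega) (by omega) :=
    get_congr _ rfl (by omega) _ _ _ _
  have e3 : Arr.get U1 0 (A.cols + 0) (by omega) (by omega)
      = Arr.get B 0 0 (by omega) (by omega) :=
    colCat_get_right h1 0 0 _ _ _ (by omega)
  have f1 : Arr.get U 1 0 p3 p4 = Arr.get U (U1.rows + 0) 0 (by omega) (by omega) :=
    get_congr _ (by omega) rfl _ _ _ _
  have f2 : Arr.get U (U1.rows + 0) 0 (by omega) (by omega)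
      = Arr.get U2 0 0 (by omega) (by omega) :=
    rowCat_get_bot h3 0 0 _ _ (by omega) (by omega)
  have f3 : Arr.get U2 0 0 (by omega) (by omega) = Arr.get B 0 0 (by omega) (by omega) :=
    colCat_get_left h2 0 0 _ _ (by omega) (by omega)
  rw [e1, e2, e3, f1, f2, f3]

theorem q1r (x y z : σ) : mk2 x y z ∈ langOf σ Mode.r alpha16 := by
  have h1 : colCat (one x) (one y) = some (two x y) := by
    rw [colCat_def (one x) (one y) rfl]
    congr 1
    refine arr_eq _ _ rfl rfl ?_
    intro i j hi hj hi' hj'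
    have hj2 : j < 2 := hj
    simp only [hcat, one, two, Arr.get]
    by_cases hj0 : j = 0
    · subst hj0; simp
    · have : j = 1 := by omega
      subst this; simp
  have h2 : colCat (one y) (one z) = some (two y z) := by
    rw [colCat_def (one y) (one z) rfl]
    congr 1
    refine arr_eq _ _ rfl rfl ?_
    intro i j hi hj hi' hj'
    have hj2 : j < 2 := hj
    simp only [hcat, one, two, Arr.get]
    by_cases hj0 : j = 0
    · subst hj0; simp
    · have : j = 1 := by omega
      subst this; simp
  have h3 : rowCat (two x y) (two y z) = some (mk2 x y z) := by
    rw [rowCat_def (two x y) (two y z) rfl]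
    congr 1
    refine arr_eq _ _ rfl rfl ?_
    intro i j hi hj hi' hj'
    have hi2 : i < 2 := hi
    simp only [vcat, one, two, mk2, Arr.get]
    by_cases hi0 : i = 0
    · subst hi0; simp
    · have : i = 1 := by omega
      subst this; simp [Fin.cast]
  exact r16_cons h1 h2 h3

end StmtAux
namespace StmtAux
open Arr
variable {σ : Type}

theorem mem_c_iff {α : Arr ℕ} {U : Arr σ} :
    (∃ s : ℕ → Arr σ, subRC s α = some U) ↔ (∃ s : ℕ → Arr σ, subCR s (tr α) = some (tr U)) := by
  constructor
  · rintro ⟨s, hs⟩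
    exact ⟨fun x => tr (s x), by rw [subCR_tr, hs]; rfl⟩
  · rintro ⟨s, hs⟩
    refine ⟨fun x => tr (s x), ?_⟩
    have := subRC_tr s (tr α)
    rw [tr_tr, hs] at this
    simpa using this

theorem mem_r_iff {α : Arr ℕ} {U : Arr σ} :
    (∃ s : ℕ → Arr σ, subCR s α = some U) ↔ (∃ s : ℕ → Arr σ, subRC s (tr α) = some (tr U)) := by
  constructor
  · rintro ⟨s, hs⟩
    exact ⟨fun x => tr (s x), by rw [subRC_tr, hs]; rfl⟩
  · rintro ⟨s, hs⟩
    refine ⟨fun x => tr (s x), ?_⟩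
    have := subCR_tr s (tr α)
    rw [tr_tr, hs] at this
    simpa using this

theorem q1rc (x y z : σ) : mk2 x y z ∈ langOf σ Mode.rc alpha16 :=
  Or.inl (q1r x y z)

theorem q2rc {U : Arr σ} (h : U ∈ langOf σ Mode.rc alpha16) : 2 ≤ U.rows ∧ 2 ≤ U.cols := by
  rcases h with h | h
  · exact q2r h
  · have : tr U ∈ langOf σ Mode.r alpha16 := by
      rw [show (alpha16 : Arr ℕ) = tr alpha16 from tr_alpha16.symm]
      exact mem_c_iff.mp h
    have := q2r this
    exact ⟨this.2, this.1⟩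

theorem q3rc {U : Arr σ} (h : U ∈ langOf σ Mode.rc alpha16) (hr : U.rows = 2) (hc : U.cols = 2)
    (p1 : 0 < U.rows) (p2 : 1 < U.cols) (p3 : 1 < U.rows) (p4 : 0 < U.cols) :
    Arr.get U 0 1 p1 p2 = Arr.get U 1 0 p3 p4 := by
  rcases h with h | h
  · exact q3r h hr hc p1 p2 p3 p4
  · have htr : tr U ∈ langOf σ Mode.r alpha16 := by
      rw [show (alpha16 : Arr ℕ) = tr alpha16 from tr_alpha16.symm]
      exact mem_c_iff.mp h
    have := q3r htr (by simpa [tr] using hc) (by simpa [tr] using hr) p4 p3 p2 p1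
    rw [tr_get, tr_get] at this
    exact this.symm

def w24 (x y z x' y' z' : σ) : Arr σ :=
  ⟨2, 4, two_pos, four_pos, fun i j =>
    if (i : ℕ) = 0 then
      (if (j : ℕ) = 0 then x else if (j : ℕ) = 1 then y else if (j : ℕ) = 2 then x' else y')
    else
      (if (j : ℕ) = 0 then y else if (j : ℕ) = 1 then z else if (j : ℕ) = 2 then y' else z')⟩

theorem w24_cat (x y z x' y' z' : σ) :
    colCat (mk2 x y z) (mk2 x' y' z') = some (w24 x y z x' y' z') := by
  rw [colCat_def (mk2 x y z) (mk2 x' y' z') rfl]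
  congr 1
  refine arr_eq _ _ rfl rfl ?_
  intro i j hi hj hi' hj'
  have hi2 : i < 2 := hi
  have hj4 : j < 4 := hj
  simp only [hcat, mk2, w24, Arr.get]
  interval_cases i <;> interval_cases j <;> simp

theorem w24_mem {M : Set (Arr σ)} (q1 : ∀ x y z : σ, mk2 x y z ∈ M) (x y z x' y' z' : σ) :
    w24 x y z x' y' z' ∈ colCatLang M M :=
  ⟨mk2 x y z, q1 x y z, mk2 x' y' z', q1 x' y' z', w24_cat x y z x' y' z'⟩

/-- a 1×n array given by an ℕ-indexed function -/
def rowF (n : ℕ) (hn : 0 < n) (g : ℕ → σ) : Arr σ := ⟨1, n, one_pos, hn, fun _ j => g j.val⟩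

theorem colCat_rowF (m n : ℕ) (hm : 0 < m) (hn : 0 < n) (g h : ℕ → σ) :
    colCat (rowF m hm g) (rowF n hn h) =
      some (rowF (m + n) (by omega) (fun j => if j < m then g j else h (j - m))) := by
  rw [colCat_def (rowF m hm g) (rowF n hn h) rfl]
  congr 1

/-- a 2×n array from two rows -/
def colP (n : ℕ) (hn : 0 < n) (g h : ℕ → σ) : Arr σ :=
  ⟨2, n, two_pos, hn, fun i j => if (i : ℕ) = 0 then g j.val else h j.val⟩

theorem rowCat_rowF (n : ℕ) (hn hn' : 0 < n) (g h : ℕ → σ) :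
    rowCat (rowF n hn g) (rowF n hn' h) = some (colP n hn g h) := by
  rw [rowCat_def (rowF n hn g) (rowF n hn' h) rfl]
  congr 1
  refine arr_eq _ _ rfl rfl ?_
  intro i j hi hj hi' hj'
  have hi2 : i < 2 := hi
  simp only [vcat, rowF, colP, Arr.get]
  interval_cases i <;> simp

theorem colP_get (n : ℕ) (hn : 0 < n) (g h : ℕ → σ) (i j : ℕ) (hi : i < 2) (hj : j < n)
    (p1 : i < (colP n hn g h).rows) (p2 : j < (colP n hn g h).cols) :
    Arr.get (colP n hn g h) i j p1 p2 = if i = 0 then g j else h j := rfl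

theorem subCR_24_eval (e : Fin 2 → Fin 4 → ℕ) (p : 0 < 2) (q : 0 < 4) (s : ℕ → Arr σ)
    {X2 X1 R0 Y2 Y1 R1 W : Arr σ}
    (h1 : colCat (s (e 0 2)) (s (e 0 3)) = some X2)
    (h2 : colCat (s (e 0 1)) X2 = some X1)
    (h3 : colCat (s (e 0 0)) X1 = some R0)
    (h4 : colCat (s (e 1 2)) (s (e 1 3)) = some Y2)
    (h5 : colCat (s (e 1 1)) Y2 = some Y1)
    (h6 : colCat (s (e 1 0)) Y1 = some R1)
    (h7 : rowCat R0 R1 = some W) :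
    subCR s (⟨2, 4, p, q, e⟩ : Arr ℕ) = some W := by
  rw [subCR]
  have hof2 : ∀ (g : Fin 2 → Option (Arr σ)), List.ofFn g = [g 0, g 1] := fun g => by
    rw [List.ofFn_succ, List.ofFn_succ, List.ofFn_zero]; rfl
  have hof4 : ∀ (g : Fin 4 → Option (Arr σ)), List.ofFn g = [g 0, g 1, g 2, g 3] := fun g => by
    rw [List.ofFn_succ, List.ofFn_succ, List.ofFn_succ, List.ofFn_succ, List.ofFn_zero]; rfl
  show catListO rowCat (List.ofFn fun i : Fin 2 =>
      catListO colCat (List.ofFn fun j : Fin 4 => some (s ((⟨2,4,p,q,e⟩ : Arr ℕ).entry i j)))) = _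
  simp only [hof2, hof4]
  rw [catListO_cons_cons, catListO_cons_cons, catListO_cons_cons, catListO_cons_cons,
    catListO_cons_cons, catListO_cons_cons, catListO_cons_cons]
  simp only [catListO, Option.bind_some, h1, h2, h3, h4, h5, h6, h7]

end StmtAux
namespace StmtAux
open Arr
variable {σ : Type}

theorem arr_canon {τ : Type} (A : Arr τ) (m n : ℕ) (hm : A.rows = m) (hn : A.cols = n)
    (pm : 0 < m) (pn : 0 < n) : ∃ e : Fin m → Fin n → τ, A = ⟨m, n, pm, pn, e⟩ := by
  rcases A with ⟨r, c, pr, pc, ent⟩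
  simp only at hm hn
  subst hm; subst hn
  exact ⟨ent, rfl⟩

theorem main (a b : σ) (hab : a ≠ b) (M : Set (Arr σ)) (γ : Arr ℕ)
    (q1 : ∀ x y z : σ, mk2 x y z ∈ M)
    (q2 : ∀ U ∈ M, 2 ≤ U.rows ∧ 2 ≤ U.cols)
    (q3 : ∀ U ∈ M, U.rows = 2 → U.cols = 2 →
      ∀ (p1 : 0 < U.rows) (p2 : 1 < U.cols) (p3 : 1 < U.rows) (p4 : 0 < U.cols),
        Arr.get U 0 1 p1 p2 = Arr.get U 1 0 p3 p4)
    (h1 : ∀ f : ℕ → σ, mkImg γ f ∈ colCatLang M M)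
    (h2 : ∀ W ∈ colCatLang M M, γ.rows ≤ W.rows ∧ γ.cols ≤ W.cols)
    (h3 : ∀ W ∈ colCatLang M M, W.rows = γ.rows → W.cols = γ.cols → ∃ f : ℕ → σ, W = mkImg γ f)
    (h4 : ∀ (s : ℕ → Arr σ) W, subCR s γ = some W → W ∈ colCatLang M M) : False := by
  classical
  -- Step 1: dimensions of γ
  have hdims : γ.rows = 2 ∧ γ.cols = 4 := by
    obtain ⟨U0, hU0, V0, hV0, hc0⟩ := h1 (fun _ => a)
    obtain ⟨hr0, hr1, hc1⟩ := colCat_dest hc0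
    have hmr : (mkImg γ (fun _ : ℕ => a)).rows = γ.rows := rfl
    have hmc : (mkImg γ (fun _ : ℕ => a)).cols = γ.cols := rfl
    have hqU := q2 U0 hU0
    have hqV := q2 V0 hV0
    have hub := h2 _ (w24_mem q1 a a a a a a)
    have hwr : (w24 a a a a a a).rows = 2 := rfl
    have hwc : (w24 a a a a a a).cols = 4 := rfl
    omega
  obtain ⟨e, rfl⟩ := arr_canon γ 2 4 hdims.1 hdims.2 two_pos four_pos
  set γ' : Arr ℕ := (⟨2, 4, two_pos, four_pos, e⟩ : Arr ℕ) with hγ'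
  -- Step 2: decomposition of 2×4 members
  have hdec24 : ∀ W, W ∈ colCatLang M M → W.rows = 2 → W.cols = 4 →
      ∀ (pa : 0 < W.rows) (pb : 1 < W.cols) (pc : 1 < W.rows) (pd : 0 < W.cols)
        (pe : 3 < W.cols) (pf : 2 < W.cols),
        Arr.get W 0 1 pa pb = Arr.get W 1 0 pc pd ∧
        Arr.get W 0 3 pa pe = Arr.get W 1 2 pc pf := by
    intro W hW hWr hWc pa pb pc pd pe pf
    obtain ⟨U, hU, V, hV, hcat⟩ := hW
    obtain ⟨hrUV, hWrU, hWcUV⟩ := colCat_dest hcat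
    have hqU := q2 U hU
    have hqV := q2 V hV
    have hUr : U.rows = 2 := by omega
    have hVr : V.rows = 2 := by omega
    have hUc : U.cols = 2 := by omega
    have hVc : V.cols = 2 := by omega
    constructor
    · rw [colCat_get_left hcat 0 1 pa pb (by omega) (by omega),
        colCat_get_left hcat 1 0 pc pd (by omega) (by omega)]
      exact q3 U hU hUr hUc _ _ _ _
    · have e1 : Arr.get W 0 3 pa pe = Arr.get W 0 (U.cols + 1) pa (by omega) :=
        get_congr _ rfl (by omega) _ _ _ _
      have e2 : Arr.get W 1 2 pc pf = Arr.get W 1 (U.cols + 0) pc (by omega) :=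
        get_congr _ rfl (by omega) _ _ _ _
      rw [e1, e2, colCat_get_right hcat 0 1 _ _ (by omega) (by omega),
        colCat_get_right hcat 1 0 _ _ (by omega) (by omega)]
      exact q3 V hV hVr hVc _ _ _ _
  -- Step 3: the two forced equalities
  have he1 : e 0 1 = e 1 0 := by
    by_contra hne
    have hm := h1 (fun x => if x = e 0 1 then a else b)
    have hd : (if e 0 1 = e 0 1 then a else b) = (if e 1 0 = e 0 1 then a else b) :=
      (hdec24 _ hm rfl rfl (by norm_num : (0:ℕ) < 2) (by norm_num : (1:ℕ) < 4)
      (by norm_num : (1:ℕ) < 2) (by norm_num : (0:ℕ) < 4)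
      (by norm_num : (3:ℕ) < 4) (by norm_num : (2:ℕ) < 4)).1
    rw [if_pos rfl, if_neg (fun hh : e 1 0 = e 0 1 => hne hh.symm)] at hd
    exact hab hd
  have he2 : e 0 3 = e 1 2 := by
    by_contra hne
    have hm := h1 (fun x => if x = e 0 3 then a else b)
    have hd : (if e 0 3 = e 0 3 then a else b) = (if e 1 2 = e 0 3 then a else b) :=
      (hdec24 _ hm rfl rfl (by norm_num : (0:ℕ) < 2) (by norm_num : (1:ℕ) < 4)
      (by norm_num : (1:ℕ) < 2) (by norm_num : (0:ℕ) < 4)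
      (by norm_num : (3:ℕ) < 4) (by norm_num : (2:ℕ) < 4)).2
    rw [if_pos rfl, if_neg (fun hh : e 1 2 = e 0 3 => hne hh.symm)] at hd
    exact hab hd
  -- Step 4: separations
  have hsep : ∀ (d : Fin 2 → Fin 4 → σ), d 0 1 = d 1 0 → d 0 3 = d 1 2 →
      ∃ f : ℕ → σ, ∀ (i : Fin 2) (j : Fin 4), d i j = f (e i j) := by
    intro d hd1 hd2
    have hmem := w24_mem q1 (d 0 0) (d 0 1) (d 1 1) (d 0 2) (d 0 3) (d 1 3)
    obtain ⟨f, hf⟩ := h3 _ hmem rfl rfl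
    refine ⟨f, fun i j => ?_⟩
    have hg : Arr.get (w24 (d 0 0) (d 0 1) (d 1 1) (d 0 2) (d 0 3) (d 1 3)) (i : ℕ) (j : ℕ)
        (i.isLt : (i:ℕ) < 2) (j.isLt : (j:ℕ) < 4) = f (e i j) :=
      get_of_eq hf (i : ℕ) (j : ℕ) (i.isLt : (i:ℕ) < 2) (j.isLt : (j:ℕ) < 4)
    rw [← hg]
    fin_cases i <;> fin_cases j <;>
      simp [w24, Arr.get, hd1, hd2, show ((3:Fin 4):ℕ) = 3 from rfl, show ((2:Fin 4):ℕ) = 2 from rfl, show ((1:Fin 4):ℕ) = 1 from rfl]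
  obtain ⟨f1, hf1⟩ := hsep (fun i j => if i = 0 ∧ j = 0 then a else b) (by simp) (by simp)
  obtain ⟨f2, hf2⟩ := hsep (fun i j => if i = 1 ∧ j = 3 then a else b) (by simp) (by simp)
  obtain ⟨f3, hf3⟩ := hsep (fun i j => if (i = 0 ∧ j = 1) ∨ (i = 1 ∧ j = 0) then a else b)
    (by simp) (by simp)
  have sep00 : ∀ (i : Fin 2) (j : Fin 4), ¬(i = 0 ∧ j = 0) → e 0 0 ≠ e i j := by
    intro i j hij heq
    have h00 : (if (0 : Fin 2) = 0 ∧ (0 : Fin 4) = 0 then a else b) = f1 (e 0 0) := hf1 0 0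
    have hij' : (if i = 0 ∧ j = 0 then a else b) = f1 (e i j) := hf1 i j
    rw [if_pos ⟨rfl, rfl⟩] at h00
    rw [if_neg hij, ← heq, ← h00] at hij'
    exact hab hij'.symm
  have sep13 : ∀ (i : Fin 2) (j : Fin 4), ¬(i = 1 ∧ j = 3) → e 1 3 ≠ e i j := by
    intro i j hij heq
    have h00 : (if (1 : Fin 2) = 1 ∧ (3 : Fin 4) = 3 then a else b) = f2 (e 1 3) := hf2 1 3
    have hij' : (if i = 1 ∧ j = 3 then a else b) = f2 (e i j) := hf2 i j
    rw [if_pos ⟨rfl, rfl⟩] at h00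
    rw [if_neg hij, ← heq, ← h00] at hij'
    exact hab hij'.symm
  have sep01 : ∀ (i : Fin 2) (j : Fin 4), ¬((i = 0 ∧ j = 1) ∨ (i = 1 ∧ j = 0)) → e 0 1 ≠ e i j := by
    intro i j hij heq
    have h00 : (if ((0 : Fin 2) = 0 ∧ (1 : Fin 4) = 1) ∨ ((0 : Fin 2) = 1 ∧ (1 : Fin 4) = 0)
        then a else b) = f3 (e 0 1) := hf3 0 1
    have hij' : (if (i = 0 ∧ j = 1) ∨ (i = 1 ∧ j = 0) then a else b) = f3 (e i j) := hf3 i j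
    rw [if_pos (Or.inl ⟨rfl, rfl⟩)] at h00
    rw [if_neg hij, ← heq, ← h00] at hij'
    exact hab hij'.symm
  -- Step 5: the substitution s and the 2×5 witness
  set s : ℕ → Arr σ := fun x =>
    if x = e 0 0 then rowF 2 two_pos (fun _ => a)
    else if x = e 1 3 then rowF 2 two_pos (fun _ => b)
    else if x = e 0 1 then rowF 1 one_pos (fun _ => b)
    else rowF 1 one_pos (fun _ => a) with hs
  have hs00 : s (e 0 0) = rowF 2 two_pos (fun _ => a) := by simp [hs]
  have hs13 : s (e 1 3) = rowF 2 two_pos (fun _ => b) := by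
    simp only [hs]
    rw [if_neg (Ne.symm (sep00 1 3 (by decide)))]
    simp
  have hs01 : s (e 0 1) = rowF 1 one_pos (fun _ => b) := by
    simp only [hs]
    rw [if_neg (Ne.symm (sep00 0 1 (by decide))), if_neg (Ne.symm (sep13 0 1 (by decide)))]
    simp
  have hs02 : s (e 0 2) = rowF 1 one_pos (fun _ => a) := by
    simp only [hs]
    rw [if_neg (Ne.symm (sep00 0 2 (by decide))), if_neg (Ne.symm (sep13 0 2 (by decide))),
      if_neg (Ne.symm (sep01 0 2 (by decide)))]
  have hs03 : s (e 0 3) = rowF 1 one_pos (fun _ => a) := by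
    simp only [hs]
    rw [if_neg (Ne.symm (sep00 0 3 (by decide))), if_neg (Ne.symm (sep13 0 3 (by decide))),
      if_neg (Ne.symm (sep01 0 3 (by decide)))]
  have hs10 : s (e 1 0) = rowF 1 one_pos (fun _ => b) := by rw [← he1]; exact hs01
  have hs11 : s (e 1 1) = rowF 1 one_pos (fun _ => a) := by
    simp only [hs]
    rw [if_neg (Ne.symm (sep00 1 1 (by decide))), if_neg (Ne.symm (sep13 1 1 (by decide))),
      if_neg (Ne.symm (sep01 1 1 (by decide)))]
  have hs12 : s (e 1 2) = rowF 1 one_pos (fun _ => a) := by rw [← he2]; exact hs03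
  -- the row functions
  set gx2 : ℕ → σ := fun j => if j < 1 then a else a with hgx2
  set gx1 : ℕ → σ := fun j => if j < 1 then b else gx2 (j - 1) with hgx1
  set g0 : ℕ → σ := fun j => if j < 2 then a else gx1 (j - 2) with hg0
  set gy2 : ℕ → σ := fun j => if j < 1 then a else b with hgy2
  set gy1 : ℕ → σ := fun j => if j < 1 then a else gy2 (j - 1) with hgy1
  set g1 : ℕ → σ := fun j => if j < 1 then b else gy1 (j - 1) with hg1
  have hsub : subCR s γ' = some (colP 5 (by norm_num) g0 g1) := by
    have c1 : colCat (s (e 0 2)) (s (e 0 3)) = some (rowF 2 two_pos gx2) := by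
      rw [hs02, hs03]; exact colCat_rowF 1 1 one_pos one_pos _ _
    have c2 : colCat (s (e 0 1)) (rowF 2 two_pos gx2) = some (rowF 3 (by norm_num) gx1) := by
      rw [hs01]; exact colCat_rowF 1 2 one_pos two_pos _ _
    have c3 : colCat (s (e 0 0)) (rowF 3 (by norm_num) gx1) = some (rowF 5 (by norm_num) g0) := by
      rw [hs00]; exact colCat_rowF 2 3 two_pos (by norm_num) _ _
    have c4 : colCat (s (e 1 2)) (s (e 1 3)) = some (rowF 3 (by norm_num) gy2) := by
      rw [hs12, hs13]; exact colCat_rowF 1 2 one_pos two_pos _ _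
    have c5 : colCat (s (e 1 1)) (rowF 3 (by norm_num) gy2) = some (rowF 4 (by norm_num) gy1) := by
      rw [hs11]; exact colCat_rowF 1 3 one_pos (by norm_num) _ _
    have c6 : colCat (s (e 1 0)) (rowF 4 (by norm_num) gy1) = some (rowF 5 (by norm_num) g1) := by
      rw [hs10]; exact colCat_rowF 1 4 one_pos (by norm_num) _ _
    have c7 : rowCat (rowF 5 (by norm_num) g0) (rowF 5 (by norm_num) g1)
        = some (colP 5 (by norm_num) g0 g1) := rowCat_rowF 5 (by norm_num) (by norm_num) g0 g1
    exact subCR_24_eval e two_pos four_pos s c1 c2 c3 c4 c5 c6 c7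
  -- the witness is in L but cannot be decomposed
  have hWmem := h4 s _ hsub
  obtain ⟨U, hU, V, hV, hcat⟩ := hWmem
  obtain ⟨hrUV, hWrU, hWcUV⟩ := colCat_dest hcat
  have hqU := q2 U hU
  have hqV := q2 V hV
  have hWr : (colP 5 (by norm_num) g0 g1).rows = 2 := rfl
  have hWc : (colP 5 (by norm_num) g0 g1).cols = 5 := rfl
  have hgv1 : g0 1 = a := by rw [hg0]; norm_num
  have hgv2 : g1 0 = b := by rw [hg1]; norm_num
  have hgv3 : g0 4 = a := by rw [hg0, hgx1, hgx2]; norm_num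
  have hgv4 : g1 3 = b := by rw [hg1, hgy1, hgy2]; norm_num
  have hUcases : U.cols = 2 ∨ U.cols = 3 := by omega
  rcases hUcases with hU2 | hU3
  · have hq := q3 U hU (by omega) hU2 (by omega) (by omega) (by omega) (by omega)
    rw [← colCat_get_left hcat 0 1 (by omega) (by omega) (by omega) (by omega),
      ← colCat_get_left hcat 1 0 (by omega) (by omega) (by omega) (by omega)] at hq
    rw [colP_get _ _ _ _ 0 1 (by norm_num) (by norm_num),
      colP_get _ _ _ _ 1 0 (by norm_num) (by norm_num)] at hq
    norm_num at hq
    rw [hgv1, hgv2] at hq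
    exact hab hq
  · have hVc2 : V.cols = 2 := by omega
    have hq := q3 V hV (by omega) hVc2 (by omega) (by omega) (by omega) (by omega)
    rw [← colCat_get_right hcat 0 1 (by omega) (by omega) (by omega) (by omega),
      ← colCat_get_right hcat 1 0 (by omega) (by omega) (by omega) (by omega)] at hq
    have e1 : Arr.get (colP 5 (by norm_num) g0 g1) 0 (U.cols + 1) (by omega) (by omega)
        = Arr.get (colP 5 (by norm_num) g0 g1) 0 4 (by omega) (by omega) :=
      get_congr _ rfl (by omega) _ _ _ _
    have e2 : Arr.get (colP 5 (by norm_num) g0 g1) 1 (U.cols + 0) (by omega) (by omega)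
        = Arr.get (colP 5 (by norm_num) g0 g1) 1 3 (by omega) (by omega) :=
      get_congr _ rfl (by omega) _ _ _ _
    rw [e1, e2] at hq
    rw [colP_get _ _ _ _ 0 4 (by norm_num) (by norm_num),
      colP_get _ _ _ _ 1 3 (by norm_num) (by norm_num)] at hq
    norm_num at hq
    rw [hgv3, hgv4] at hq
    exact hab hq

end StmtAux
namespace StmtAux
open Arr
variable {σ : Type}

theorem part1 (a b : σ) (hab : a ≠ b) (γ : Arr ℕ)
    (hEq : colCatLang (langOf σ Mode.r alpha16) (langOf σ Mode.r alpha16)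
      = langOf σ Mode.r γ) : False := by
  refine main a b hab (langOf σ Mode.r alpha16) γ q1r (fun U hU => q2r hU) (fun U hU => q3r hU) ?_ ?_ ?_ ?_
  · intro f
    rw [hEq]
    exact ⟨fun x => one (f x), mkImg_mem γ f⟩
  · intro W hW
    rw [hEq] at hW
    obtain ⟨s, hs⟩ := hW
    exact subCR_dims hs
  · intro W hW hr hc
    rw [hEq] at hW
    obtain ⟨s, hs⟩ := hW
    exact subCR_rigid hs hr hc
  · intro s W hs
    rw [hEq]
    exact ⟨s, hs⟩

theorem subRC_dims {s : ℕ → Arr σ} {γ : Arr ℕ} {W : Arr σ} (h : subRC s γ = some W) :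
    γ.rows ≤ W.rows ∧ γ.cols ≤ W.cols := by
  have htr : subCR (fun x => tr (s x)) (tr γ) = some (tr W) := by rw [subCR_tr, h]; rfl
  have := subCR_dims htr
  exact ⟨this.2, this.1⟩

theorem subRC_rigid {s : ℕ → Arr σ} {γ : Arr ℕ} {W : Arr σ} (h : subRC s γ = some W)
    (hr : W.rows = γ.rows) (hc : W.cols = γ.cols) : ∃ f : ℕ → σ, W = mkImg γ f := by
  have htr : subCR (fun x => tr (s x)) (tr γ) = some (tr W) := by rw [subCR_tr, h]; rfl
  obtain ⟨f, hf⟩ := subCR_rigid htr hc hr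
  refine ⟨f, ?_⟩
  have : tr (tr W) = tr (mkImg (tr γ) f) := congrArg tr hf
  rw [tr_tr] at this
  rw [this]
  rfl

theorem part4 (a b : σ) (hab : a ≠ b) (γ : Arr ℕ)
    (hEq : colCatLang (langOf σ Mode.rc alpha16) (langOf σ Mode.rc alpha16)
      = langOf σ Mode.rc γ) : False := by
  refine main a b hab (langOf σ Mode.rc alpha16) γ q1rc (fun U hU => q2rc hU) (fun U hU => q3rc hU) ?_ ?_ ?_ ?_
  · intro f
    rw [hEq]
    exact Or.inl ⟨fun x => one (f x), mkImg_mem γ f⟩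
  · intro W hW
    rw [hEq] at hW
    rcases hW with ⟨s, hs⟩ | ⟨s, hs⟩
    · exact subCR_dims hs
    · exact subRC_dims hs
  · intro W hW hr hc
    rw [hEq] at hW
    rcases hW with ⟨s, hs⟩ | ⟨s, hs⟩
    · exact subCR_rigid hs hr hc
    · exact subRC_rigid hs hr hc
  · intro s W hs
    rw [hEq]
    exact Or.inl ⟨s, hs⟩

theorem part2 (a b : σ) (hab : a ≠ b) (γ : Arr ℕ)
    (hEq : rowCatLang (langOf σ Mode.c alpha16) (langOf σ Mode.c alpha16)
      = langOf σ Mode.c γ) : False := by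
  apply part1 a b hab (tr γ)
  ext W
  constructor
  · rintro ⟨U, hU, V, hV, hcat⟩
    obtain ⟨sU, hsU⟩ := hU
    obtain ⟨sV, hsV⟩ := hV
    have hU' : tr U ∈ langOf σ Mode.c alpha16 := by
      refine ⟨fun x => tr (sU x), ?_⟩
      rw [show (alpha16 : Arr ℕ) = tr alpha16 from tr_alpha16.symm, subRC_tr, hsU]; rfl
    have hV' : tr V ∈ langOf σ Mode.c alpha16 := by
      refine ⟨fun x => tr (sV x), ?_⟩
      rw [show (alpha16 : Arr ℕ) = tr alpha16 from tr_alpha16.symm, subRC_tr, hsV]; rfl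
    have hmem : tr W ∈ rowCatLang (langOf σ Mode.c alpha16) (langOf σ Mode.c alpha16) :=
      ⟨tr U, hU', tr V, hV', by rw [tr_colCat, hcat]; rfl⟩
    rw [hEq] at hmem
    obtain ⟨s', hs'⟩ := hmem
    exact ⟨fun x => tr (s' x), by rw [subCR_tr, hs']; rfl⟩
  · rintro ⟨s, hs⟩
    have : subRC (fun x => tr (s x)) γ = some (tr W) := by
      have := subRC_tr s (tr γ)
      rw [tr_tr] at this
      rw [this, hs]; rfl
    have hmem : tr W ∈ rowCatLang (langOf σ Mode.c alpha16) (langOf σ Mode.c alpha16) := by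
      rw [hEq]; exact ⟨_, this⟩
    obtain ⟨U, hU, V, hV, hcat⟩ := hmem
    obtain ⟨sU, hsU⟩ := hU
    obtain ⟨sV, hsV⟩ := hV
    refine ⟨tr U, ?_, tr V, ?_, ?_⟩
    · refine ⟨fun x => tr (sU x), ?_⟩
      have h2 := subCR_tr sU alpha16
      rw [tr_alpha16] at h2
      rw [h2, hsU]; rfl
    · refine ⟨fun x => tr (sV x), ?_⟩
      have h2 := subCR_tr sV alpha16
      rw [tr_alpha16] at h2
      rw [h2, hsV]; rfl
    · rw [tr_rowCat, hcat]
      simp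
theorem rc_tr {U : Arr σ} : U ∈ langOf σ Mode.rc alpha16 ↔ tr U ∈ langOf σ Mode.rc alpha16 := by
  constructor
  · rintro (⟨s, hs⟩ | ⟨s, hs⟩)
    · refine Or.inr ⟨fun x => tr (s x), ?_⟩
      rw [show (alpha16 : Arr ℕ) = tr alpha16 from tr_alpha16.symm, subRC_tr, hs]; rfl
    · refine Or.inl ⟨fun x => tr (s x), ?_⟩
      rw [show (alpha16 : Arr ℕ) = tr alpha16 from tr_alpha16.symm, subCR_tr, hs]; rfl
  · rintro (⟨s, hs⟩ | ⟨s, hs⟩)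
    · refine Or.inr ⟨fun x => tr (s x), ?_⟩
      have h2 := subRC_tr s (tr alpha16)
      rw [tr_tr] at h2
      rw [tr_alpha16] at h2
      rw [h2, hs]; rfl
    · refine Or.inl ⟨fun x => tr (s x), ?_⟩
      have h2 := subCR_tr s (tr alpha16)
      rw [tr_tr] at h2
      rw [tr_alpha16] at h2
      rw [h2, hs]; rfl

theorem part3 (a b : σ) (hab : a ≠ b) (γ : Arr ℕ)
    (hEq : rowCatLang (langOf σ Mode.rc alpha16) (langOf σ Mode.rc alpha16)
      = langOf σ Mode.rc γ) : False := by
  apply part4 a b hab (tr γ)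
  ext W
  constructor
  · rintro ⟨U, hU, V, hV, hcat⟩
    have hmem : tr W ∈ rowCatLang (langOf σ Mode.rc alpha16) (langOf σ Mode.rc alpha16) :=
      ⟨tr U, rc_tr.mp hU, tr V, rc_tr.mp hV, by rw [tr_colCat, hcat]; rfl⟩
    rw [hEq] at hmem
    rcases hmem with ⟨s, hs⟩ | ⟨s, hs⟩
    · -- subCR s γ = some (tr W)  ⇒  W ∈ Lc (tr γ)
      refine Or.inr ⟨fun x => tr (s x), ?_⟩
      rw [subRC_tr, hs]; rfl
    · refine Or.inl ⟨fun x => tr (s x), ?_⟩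
      rw [subCR_tr, hs]; rfl
  · intro hW
    have hmem : tr W ∈ langOf σ Mode.rc γ := by
      rcases hW with ⟨s, hs⟩ | ⟨s, hs⟩
      · refine Or.inr ⟨fun x => tr (s x), ?_⟩
        have h2 := subRC_tr s (tr γ)
        rw [tr_tr] at h2
        rw [h2, hs]; rfl
      · refine Or.inl ⟨fun x => tr (s x), ?_⟩
        have h2 := subCR_tr s (tr γ)
        rw [tr_tr] at h2
        rw [h2, hs]; rfl
    rw [← hEq] at hmem
    obtain ⟨U, hU, V, hV, hcat⟩ := hmem
    refine ⟨tr U, rc_tr.mp hU, tr V, rc_tr.mp hV, ?_⟩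
    rw [tr_rowCat, hcat]
    simp

end StmtAux

/-- over a non-unary alphabet, `𝓛_{Σ,r}` is not closed under
column concatenation (witnessed by `α = [x₁ x₂; x₂ x₃]`), `𝓛_{Σ,c}` is not
closed under row concatenation, and `𝓛_{Σ,rc}` is closed under neither. -/
theorem stmt16 {σ : Type} [Fintype σ] (hcard : 2 ≤ Fintype.card σ) :
    (∀ γ : Arr ℕ,
      colCatLang (langOf σ Mode.r alpha16) (langOf σ Mode.r alpha16) ≠
        langOf σ Mode.r γ) ∧
    (∃ α β : Arr ℕ, ∀ γ : Arr ℕ,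
      rowCatLang (langOf σ Mode.c α) (langOf σ Mode.c β) ≠ langOf σ Mode.c γ) ∧
    (∃ α β : Arr ℕ, ∀ γ : Arr ℕ,
      rowCatLang (langOf σ Mode.rc α) (langOf σ Mode.rc β) ≠ langOf σ Mode.rc γ) ∧
    (∃ α β : Arr ℕ, ∀ γ : Arr ℕ,
      colCatLang (langOf σ Mode.rc α) (langOf σ Mode.rc β) ≠ langOf σ Mode.rc γ) := by
  obtain ⟨a, b, hab⟩ := Fintype.exists_pair_of_one_lt_card (α := σ) (by omega)
  exact ⟨fun γ hEq => StmtAux.part1 a b hab γ hEq,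
    ⟨alpha16, alpha16, fun γ hEq => StmtAux.part2 a b hab γ hEq⟩,
    ⟨alpha16, alpha16, fun γ hEq => StmtAux.part3 a b hab γ hEq⟩,
    ⟨alpha16, alpha16, fun γ hEq => StmtAux.part4 a b hab γ hEq⟩⟩
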